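/- For every m > β + 4 there exists a constant C_m, depending only on m, β, C_f and the constants in (P1)–(P3), such that ũ(x) ≤ C_m(1+|x|^m) for all x ∈ ℝ^d. In particular u is well defined (the defining integral converges absolutely for every x), |u(x)| ≤ ũ(x) ≤ C_m(1+|x|^m), and u is μ-integrable. -/

import Mathlib

open MeasureTheory Set

/-- Total variation norm of the difference of two (finite) measures. -/
noncomputable def tvNorm {α : Type*} [MeasurableSpace α] (μ ν : Measure α) : ℝ :=
  (⨆ (E : Set α) (_ : MeasurableSet E), (μ E - ν E)).toReal +
  (⨆ (E : Set α) (_ : MeasurableSet E), (ν E - μ E)).toReal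

open ENNReal
set_option maxHeartbeats 2000000

lemma ennreal_one_sub_sub {a b : ℝ≥0∞} (ha : a ≤ 1) : (1 - b) - (1 - a) = a - b := by
  rcases le_total a b with h | h
  · rw [tsub_eq_zero_of_le h, tsub_eq_zero_of_le (tsub_le_tsub_left h 1)]
  · have h1 : (1 : ℝ≥0∞) - a + (a - b) = 1 - b := tsub_add_tsub_cancel ha h
    rw [← h1, ENNReal.add_sub_cancel_left (by
      exact ((tsub_le_self).trans_lt ENNReal.one_lt_top).ne)]

lemma sup_sub_le_swap {α : Type*} [MeasurableSpace α] (ν₁ ν₂ : Measure α)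
    [IsProbabilityMeasure ν₁] [IsProbabilityMeasure ν₂] :
    (⨆ (E : Set α) (_ : MeasurableSet E), (ν₁ E - ν₂ E)) ≤
      ⨆ (E : Set α) (_ : MeasurableSet E), (ν₂ E - ν₁ E) := by
  refine iSup₂_le fun E hE => ?_
  have h1 : ν₁ E - ν₂ E = ν₂ Eᶜ - ν₁ Eᶜ := by
    rw [prob_compl_eq_one_sub hE, prob_compl_eq_one_sub hE,
      ennreal_one_sub_sub (prob_le_one)]
  rw [h1]
  exact le_iSup₂ (f := fun (E : Set α) (_ : MeasurableSet E) => ν₂ E - ν₁ E) Eᶜ hE.compl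

lemma sup_sub_comm {α : Type*} [MeasurableSpace α] (ν₁ ν₂ : Measure α)
    [IsProbabilityMeasure ν₁] [IsProbabilityMeasure ν₂] :
    (⨆ (E : Set α) (_ : MeasurableSet E), (ν₁ E - ν₂ E)) =
      ⨆ (E : Set α) (_ : MeasurableSet E), (ν₂ E - ν₁ E) :=
  le_antisymm (sup_sub_le_swap ν₁ ν₂) (sup_sub_le_swap ν₂ ν₁)


lemma integrable_of_forall_abs_le {α : Type*} [MeasurableSpace α] {ν : Measure α}
    [IsFiniteMeasure ν] {g : α → ℝ} (hg : Measurable g) {M : ℝ} (hgb : ∀ a, |g a| ≤ M) :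
    Integrable g ν := by
  refine Integrable.mono' (integrable_const M) hg.aestronglyMeasurable ?_
  exact Filter.Eventually.of_forall fun a => by simpa [Real.norm_eq_abs] using hgb a

lemma int_sub_le_sup {α : Type*} [MeasurableSpace α] (ν₁ ν₂ : Measure α)
    [IsProbabilityMeasure ν₁] [IsProbabilityMeasure ν₂] {g : α → ℝ} (hg : Measurable g)
    {B : ℝ} (hB : 0 ≤ B) (hgnn : ∀ a, 0 ≤ g a) (hgb : ∀ a, g a ≤ B) :
    ∫ a, g a ∂ν₁ - ∫ a, g a ∂ν₂ ≤
      B * (⨆ (E : Set α) (_ : MeasurableSet E), (ν₁ E - ν₂ E)).toReal := by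
  set Dsup := ⨆ (E : Set α) (_ : MeasurableSet E), (ν₁ E - ν₂ E) with hD
  have hD1 : Dsup ≤ 1 := iSup₂_le fun E _ => tsub_le_self.trans prob_le_one
  have hDtop : Dsup ≠ ∞ := (hD1.trans_lt ENNReal.one_lt_top).ne
  set D := Dsup.toReal with hDr
  have hDnn : 0 ≤ D := ENNReal.toReal_nonneg
  have habs : ∀ a, |g a| ≤ B := fun a => abs_le.2 ⟨by linarith [hgnn a, hB], hgb a⟩
  have hint1 : Integrable g ν₁ := integrable_of_forall_abs_le hg habs
  have hint2 : Integrable g ν₂ := integrable_of_forall_abs_le hg habs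
  have L1 := hint1.integral_eq_integral_Ioc_meas_le (M := B)
    (Filter.Eventually.of_forall hgnn) (Filter.Eventually.of_forall hgb)
  have L2 := hint2.integral_eq_integral_Ioc_meas_le (M := B)
    (Filter.Eventually.of_forall hgnn) (Filter.Eventually.of_forall hgb)
  -- measurability and integrability of layer functions
  have hmeasφ : ∀ ν : Measure α, Measurable (fun t : ℝ => (ν {a | t ≤ g a}).toReal) := by
    intro ν
    refine Measurable.ennreal_toReal (Antitone.measurable fun s t hst => ?_)
    exact measure_mono fun a ha => hst.trans ha
  have hφb : ∀ (ν : Measure α) [IsProbabilityMeasure ν] (t : ℝ),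
      |(ν {a | t ≤ g a}).toReal| ≤ 1 := by
    intro ν _ t
    rw [abs_of_nonneg ENNReal.toReal_nonneg]
    simpa using ENNReal.toReal_mono one_ne_top (prob_le_one (μ := ν) (s := {a | t ≤ g a}))
  have hφint : ∀ (ν : Measure α) [IsProbabilityMeasure ν],
      IntegrableOn (fun t : ℝ => (ν {a | t ≤ g a}).toReal) (Ioc 0 B) := by
    intro ν _
    exact integrable_of_forall_abs_le (hmeasφ ν) (hφb ν)
  -- pointwise comparison
  have hpt : ∀ t : ℝ, (ν₁ {a | t ≤ g a}).toReal ≤ (ν₂ {a | t ≤ g a}).toReal + D := by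
    intro t
    set S := {a | t ≤ g a} with hS
    have hSm : MeasurableSet S := measurableSet_le measurable_const hg
    have h1 : ν₁ S - ν₂ S ≤ Dsup :=
      le_iSup₂ (f := fun (E : Set α) (_ : MeasurableSet E) => ν₁ E - ν₂ E) S hSm
    rcases le_total (ν₁ S) (ν₂ S) with h | h
    · have := ENNReal.toReal_mono (measure_ne_top ν₂ S) h
      linarith
    · have h2 : (ν₁ S - ν₂ S).toReal = (ν₁ S).toReal - (ν₂ S).toReal :=
        ENNReal.toReal_sub_of_le h (measure_ne_top ν₁ S)
      have h3 := ENNReal.toReal_mono hDtop h1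
      rw [h2] at h3
      linarith
  have hconst : IntegrableOn (fun _ : ℝ => D) (Ioc 0 B) :=
    integrableOn_const measure_Ioc_lt_top.ne
  have hmono : ∫ t in Ioc 0 B, (ν₁ {a | t ≤ g a}).toReal ≤
      ∫ t in Ioc 0 B, ((ν₂ {a | t ≤ g a}).toReal + D) := by
    refine setIntegral_mono_on (hφint ν₁) ((hφint ν₂).add hconst) measurableSet_Ioc ?_
    exact fun t _ => hpt t
  have hadd : ∫ t in Ioc 0 B, ((ν₂ {a | t ≤ g a}).toReal + D) =
      (∫ t in Ioc 0 B, (ν₂ {a | t ≤ g a}).toReal) + B * D := by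
    rw [integral_add (hφint ν₂) hconst, setIntegral_const, measureReal_def, Real.volume_Ioc,
      ENNReal.toReal_ofReal (by linarith : (0:ℝ) ≤ B - 0), smul_eq_mul]
    ring
  rw [L1, L2]
  simp only [measureReal_def]
  rw [hadd] at hmono
  linarith

lemma abs_integral_sub_le_tvNorm {α : Type*} [MeasurableSpace α] (ν₁ ν₂ : Measure α)
    [IsProbabilityMeasure ν₁] [IsProbabilityMeasure ν₂] {g : α → ℝ} (hg : Measurable g)
    {M : ℝ} (hM : 0 ≤ M) (hgb : ∀ a, |g a| ≤ M) :
    |∫ a, g a ∂ν₁ - ∫ a, g a ∂ν₂| ≤ M * tvNorm ν₁ ν₂ := by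
  have hshift : ∀ (ν : Measure α) [IsProbabilityMeasure ν],
      ∫ a, (g a + M) ∂ν = (∫ a, g a ∂ν) + M := by
    intro ν _
    rw [integral_add (integrable_of_forall_abs_le hg hgb) (integrable_const M),
      integral_const]
    simp
  have hgm : Measurable (fun a => g a + M) := hg.add_const M
  have hnn : ∀ a, 0 ≤ g a + M := fun a => by have := (abs_le.1 (hgb a)).1; linarith
  have hb2 : ∀ a, g a + M ≤ 2 * M := fun a => by have := (abs_le.1 (hgb a)).2; linarith
  have h1 := int_sub_le_sup ν₁ ν₂ hgm (by linarith : (0:ℝ) ≤ 2 * M) hnn hb2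
  have h2 := int_sub_le_sup ν₂ ν₁ hgm (by linarith : (0:ℝ) ≤ 2 * M) hnn hb2
  rw [hshift ν₁, hshift ν₂] at h1 h2
  have hcomm := sup_sub_comm ν₁ ν₂
  rw [hcomm] at h1
  rw [abs_le]
  unfold tvNorm
  rw [hcomm]
  constructor <;> nlinarith [h1, h2]


lemma integrable_of_abs_le_lint {α : Type*} [MeasurableSpace α] {ν : Measure α} {g b : α → ℝ}
    (hg : Measurable g) (habs : ∀ a, |g a| ≤ b a)
    (hL : ∫⁻ a, ENNReal.ofReal (b a) ∂ν < ⊤) : Integrable g ν := by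
  refine ⟨hg.aestronglyMeasurable, ?_⟩
  rw [hasFiniteIntegral_iff_norm]
  refine lt_of_le_of_lt (lintegral_mono fun a => ?_) hL
  exact ENNReal.ofReal_le_ofReal (by simpa [Real.norm_eq_abs] using habs a)

lemma integral_abs_le_of_lintegral_le {α : Type*} [MeasurableSpace α] {ν : Measure α}
    {g b : α → ℝ} (hg : Measurable g) (habs : ∀ a, |g a| ≤ b a) {B : ℝ} (hB : 0 ≤ B)
    (hL : ∫⁻ a, ENNReal.ofReal (b a) ∂ν ≤ ENNReal.ofReal B) : ∫ a, |g a| ∂ν ≤ B := by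
  have hint : Integrable g ν :=
    integrable_of_abs_le_lint hg habs (lt_of_le_of_lt hL ENNReal.ofReal_lt_top)
  rw [integral_eq_lintegral_of_nonneg_ae (Filter.Eventually.of_forall fun a => abs_nonneg _)
    hg.abs.aestronglyMeasurable]
  calc (∫⁻ a, ENNReal.ofReal |g a| ∂ν).toReal
      ≤ (ENNReal.ofReal B).toReal := by
        refine ENNReal.toReal_mono ENNReal.ofReal_ne_top ?_
        exact le_trans (lintegral_mono fun a => ENNReal.ofReal_le_ofReal (habs a)) hL
    _ = B := ENNReal.toReal_ofReal hB

lemma integrableOn_one_add_rpow {q : ℝ} (hq : q < -1) :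
    IntegrableOn (fun t : ℝ => (1 + t) ^ q) (Ioi (0:ℝ)) := by
  have hcont : ∀ s : Set ℝ, s ⊆ Ioi (0:ℝ) → ContinuousOn (fun t : ℝ => (1 + t) ^ q) s := by
    intro s hs
    refine ContinuousOn.rpow_const ((continuous_const.add continuous_id).continuousOn) ?_
    exact fun t ht => Or.inl (by have := hs ht; simp only [mem_Ioi] at this; positivity)
  rw [← Ioc_union_Ioi_eq_Ioi (zero_le_one (α := ℝ))]
  refine IntegrableOn.union ?_ ?_
  · have hc : IntegrableOn (fun _ : ℝ => (1:ℝ)) (Ioc (0:ℝ) 1) :=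
      integrableOn_const measure_Ioc_lt_top.ne
    refine Integrable.mono' hc ((hcont _ Ioc_subset_Ioi_self).aestronglyMeasurable measurableSet_Ioc) ?_
    filter_upwards [ae_restrict_mem measurableSet_Ioc] with t ht
    rw [Real.norm_eq_abs, abs_of_nonneg (Real.rpow_nonneg (by linarith [ht.1] : (0:ℝ) ≤ 1 + t) q)]
    exact Real.rpow_le_one_of_one_le_of_nonpos (by linarith [ht.1]) (by linarith)
  · refine Integrable.mono' (integrableOn_Ioi_rpow_of_lt hq one_pos) ((hcont _ (Ioi_subset_Ioi zero_le_one)).aestronglyMeasurable measurableSet_Ioi) ?_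
    filter_upwards [ae_restrict_mem measurableSet_Ioi] with t ht
    rw [Real.norm_eq_abs, abs_of_nonneg (Real.rpow_nonneg (by linarith [mem_Ioi.1 ht] : (0:ℝ) ≤ 1 + t) q)]
    exact Real.rpow_le_rpow_of_nonpos (by linarith [mem_Ioi.1 ht])
      (by linarith [mem_Ioi.1 ht]) (by linarith)

noncomputable def pKernel {Ω : Type*} [MeasurableSpace Ω] (P : ℝ → Ω → Measure Ω)
    (μ : Measure Ω)
    (hmeas : ∀ E : Set Ω, MeasurableSet E → Measurable (fun p : ℝ × Ω => P p.1 p.2 E)) :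
    ProbabilityTheory.Kernel (ℝ × Ω) Ω where
  toFun p := if 0 ≤ p.1 then P p.1 p.2 else μ
  measurable' := by
    refine Measure.measurable_of_measurable_coe _ fun s hs => ?_
    have heq : (fun p : ℝ × Ω => (if 0 ≤ p.1 then P p.1 p.2 else μ) s) =
        fun p : ℝ × Ω => if 0 ≤ p.1 then P p.1 p.2 s else μ s := by
      funext p; by_cases h : 0 ≤ p.1 <;> simp [h]
    rw [heq]
    exact Measurable.ite (measurableSet_le measurable_const measurable_fst)
      (hmeas s hs) measurable_const

lemma pKernel_apply {Ω : Type*} [MeasurableSpace Ω] (P : ℝ → Ω → Measure Ω) (μ : Measure Ω)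
    (hmeas : ∀ E : Set Ω, MeasurableSet E → Measurable (fun p : ℝ × Ω => P p.1 p.2 E))
    (p : ℝ × Ω) : pKernel P μ hmeas p = if 0 ≤ p.1 then P p.1 p.2 else μ := rfl

lemma pKernel_isMarkov {Ω : Type*} [MeasurableSpace Ω] (P : ℝ → Ω → Measure Ω) (μ : Measure Ω)
    (hmeas : ∀ E : Set Ω, MeasurableSet E → Measurable (fun p : ℝ × Ω => P p.1 p.2 E))
    (hP : ∀ t x, 0 ≤ t → IsProbabilityMeasure (P t x)) (hμ : IsProbabilityMeasure μ) :
    ProbabilityTheory.IsMarkovKernel (pKernel P μ hmeas) := by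
  refine ⟨fun p => ?_⟩
  rw [pKernel_apply]
  split_ifs with h
  · exact hP _ _ h
  · exact hμ
/-- for every `m > β + 4` there exists `C_m` such that
`ũ(x) = ∫_0^∞ |∫ f dμ_t^x| dt ≤ C_m (1+|x|^m)`; in particular `u` is well defined
(the defining integral converges absolutely), `|u(x)| ≤ ũ(x)`, and `u` is `μ`-integrable. -/
theorem stmt1
    (d : ℕ) (hd : 1 ≤ d)
    (P : ℝ → EuclideanSpace ℝ (Fin d) → Measure (EuclideanSpace ℝ (Fin d)))
    (μ : Measure (EuclideanSpace ℝ (Fin d)))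
    (hP : ∀ t x, 0 ≤ t → IsProbabilityMeasure (P t x))
    (hμ : IsProbabilityMeasure μ)
    (hmeas : ∀ E : Set (EuclideanSpace ℝ (Fin d)), MeasurableSet E →
      Measurable (fun p : ℝ × EuclideanSpace ℝ (Fin d) => P p.1 p.2 E))
    (hP1 : ∀ m m' : ℝ, 0 < m → m + 2 < m' → ∃ C : ℝ, ∀ t x, 0 ≤ t →
      ∫⁻ y, ENNReal.ofReal (‖y‖ ^ m) ∂(P t x) ≤ ENNReal.ofReal (C * (1 + ‖x‖ ^ m')))
    (hP2 : ∀ m : ℝ, 0 < m → ∫⁻ y, ENNReal.ofReal (‖y‖ ^ m) ∂μ < ⊤)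
    (hP3 : ∀ k m : ℝ, 0 < k → 2 * k + 2 < m → ∃ C : ℝ, ∀ t x, 0 ≤ t →
      tvNorm (P t x) μ ≤ C * (1 + ‖x‖ ^ m) * (1 + t) ^ (-(k + 1)))
    (β Cf : ℝ) (hβ : 0 ≤ β) (hCf : 1 ≤ Cf)
    (f : EuclideanSpace ℝ (Fin d) → ℝ) (hf : Measurable f)
    (hfb : ∀ y, |f y| ≤ Cf * (1 + ‖y‖ ^ β))
    (hfμ : ∫ y, f y ∂μ = 0) :
    ∀ m : ℝ, β + 4 < m →
      ∃ Cm : ℝ,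
        (∀ x,
          IntegrableOn (fun t => ∫ y, f y ∂(P t x)) (Ioi (0 : ℝ)) ∧
          IntegrableOn (fun t => |∫ y, f y ∂(P t x)|) (Ioi (0 : ℝ)) ∧
          (∫ t in Ioi (0 : ℝ), |∫ y, f y ∂(P t x)|) ≤ Cm * (1 + ‖x‖ ^ m) ∧
          |∫ t in Ioi (0 : ℝ), ∫ y, f y ∂(P t x)|
            ≤ ∫ t in Ioi (0 : ℝ), |∫ y, f y ∂(P t x)|) ∧
        Integrable (fun x => ∫ t in Ioi (0 : ℝ), ∫ y, f y ∂(P t x)) μ := by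
  haveI := hμ
  intro m hm
  -- parameters
  set γ : ℝ := (m - β) / 2 with hγdef
  have hγ2 : 2 < γ := by rw [hγdef]; linarith
  have hγpos : 0 < γ := by linarith
  have hβγm : β + γ + 2 < m := by rw [hγdef]; linarith
  have hβγpos : 0 < β + γ := by linarith
  set a : ℝ := (2 / (m - β) + (m - 2) / (2 * (β + 1))) / 2 with hadef
  have hmb : (0:ℝ) < m - β := by linarith
  have hb1 : (0:ℝ) < 2 * (β + 1) := by linarith
  have huv : 2 / (m - β) < (m - 2) / (2 * (β + 1)) := by
    rw [div_lt_div_iff₀ hmb hb1]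
    have h5 : (0:ℝ) < m - 2 := by linarith
    have hkey := mul_pos h5 (by linarith : (0:ℝ) < m - β - 4)
    nlinarith only [hkey, hm, hβ]
  have hupos : 0 < 2 / (m - β) := by positivity
  have hapos : 0 < a := by rw [hadef]; linarith
  have haγ : 1 < a * γ := by
    have h1 : (2 / (m - β)) * γ = 1 := by
      rw [hγdef]; field_simp
    have h2 : 2 / (m - β) < a := by rw [hadef]; linarith
    have h3 := mul_pos (by linarith : (0:ℝ) < a - 2 / (m - β)) hγpos
    nlinarith only [h3, h1]
  have hav : a < (m - 2) / (2 * (β + 1)) := by rw [hadef]; linarith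
  set k : ℝ := a * (β + 1) with hkdef
  have hk0 : 0 < k := by rw [hkdef]; positivity
  have hkm : 2 * k + 2 < m := by
    have : k < (m - 2) / 2 := by
      rw [hkdef]
      calc a * (β + 1) < ((m - 2) / (2 * (β + 1))) * (β + 1) := by
            apply mul_lt_mul_of_pos_right hav; linarith
        _ = (m - 2) / 2 := by field_simp
    linarith
  -- constants
  obtain ⟨C1, hC1⟩ := hP1 (β + γ) m hβγpos (by linarith)
  obtain ⟨C2, hC2⟩ := hP1 (β + 1) m (by linarith) (by linarith)
  obtain ⟨C3, hC3⟩ := hP3 k m hk0 hkm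
  set C1' : ℝ := max C1 0 with hC1'def
  set C3' : ℝ := max C3 0 with hC3'def
  have hC1'nn : 0 ≤ C1' := le_max_right _ _
  have hC3'nn : 0 ≤ C3' := le_max_right _ _
  have hXpos : ∀ x : EuclideanSpace ℝ (Fin d), (0:ℝ) < 1 + ‖x‖ ^ m := fun x => by
    have := Real.rpow_nonneg (norm_nonneg x) m; linarith
  have hC1' : ∀ t x, 0 ≤ t →
      ∫⁻ y, ENNReal.ofReal (‖y‖ ^ (β + γ)) ∂(P t x) ≤ ENNReal.ofReal (C1' * (1 + ‖x‖ ^ m)) := by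
    intro t x ht
    refine (hC1 t x ht).trans (ENNReal.ofReal_le_ofReal ?_)
    exact mul_le_mul_of_nonneg_right (le_max_left _ _) (hXpos x).le
  have hC3' : ∀ t x, 0 ≤ t →
      tvNorm (P t x) μ ≤ C3' * (1 + ‖x‖ ^ m) * (1 + t) ^ (-(k + 1)) := by
    intro t x ht
    refine (hC3 t x ht).trans ?_
    have h1 : (0:ℝ) ≤ (1 + t) ^ (-(k + 1)) := Real.rpow_nonneg (by linarith) _
    exact mul_le_mul_of_nonneg_right
      (mul_le_mul_of_nonneg_right (le_max_left _ _) (hXpos x).le) h1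
  -- moment of μ
  set Mμ1 : ℝ := (∫⁻ y, ENNReal.ofReal (‖y‖ ^ (β + γ)) ∂μ).toReal with hMμ1def
  have hMμ1nn : 0 ≤ Mμ1 := ENNReal.toReal_nonneg
  have hMμ1 : ∫⁻ y, ENNReal.ofReal (‖y‖ ^ (β + γ)) ∂μ = ENNReal.ofReal Mμ1 := by
    rw [hMμ1def, ENNReal.ofReal_toReal (hP2 (β + γ) hβγpos).ne]
  -- measurability of moment integrands
  have hrpmeas : ∀ q : ℝ, 0 ≤ q →
      Measurable (fun y : EuclideanSpace ℝ (Fin d) => ‖y‖ ^ q) := fun q hq =>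
    (continuous_norm.rpow_const fun _ => Or.inr hq).measurable
  -- integrability of f against probability measures with finite (β+1) moment
  have hfint : ∀ (ν : Measure (EuclideanSpace ℝ (Fin d))) [IsProbabilityMeasure ν],
      (∫⁻ y, ENNReal.ofReal (‖y‖ ^ (β + 1)) ∂ν < ⊤) → Integrable f ν := by
    intro ν _ hmom
    refine integrable_of_abs_le_lint hf (b := fun y => 2 * Cf + Cf * ‖y‖ ^ (β + 1))
      (fun y => ?_) ?_
    · have h1 : ‖y‖ ^ β ≤ 1 + ‖y‖ ^ (β + 1) := by
        rcases le_total (‖y‖) 1 with h | h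
        · have := Real.rpow_le_one (norm_nonneg y) h hβ
          have := Real.rpow_nonneg (norm_nonneg y) (β + 1); linarith
        · have := Real.rpow_le_rpow_of_exponent_le h (by linarith : β ≤ β + 1); linarith
      have h2 : Cf * (‖y‖ ^ β) ≤ Cf * (1 + ‖y‖ ^ (β + 1)) :=
        mul_le_mul_of_nonneg_left h1 (by linarith)
      have h3 := hfb y
      show |f y| ≤ 2 * Cf + Cf * ‖y‖ ^ (β + 1)
      have h4 : Cf * (1 + ‖y‖ ^ β) = Cf + Cf * ‖y‖ ^ β := by ring
      have h5 : Cf * (1 + ‖y‖ ^ (β + 1)) = Cf + Cf * ‖y‖ ^ (β + 1) := by ring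
      linarith only [h2, h3, h4.ge, h4.le, h5.ge, h5.le, hCf]
    · have heq : ∀ y : EuclideanSpace ℝ (Fin d),
          ENNReal.ofReal (2 * Cf + Cf * ‖y‖ ^ (β + 1)) =
          ENNReal.ofReal (2 * Cf) + ENNReal.ofReal Cf * ENNReal.ofReal (‖y‖ ^ (β + 1)) := by
        intro y
        rw [ENNReal.ofReal_add (by linarith) (by positivity)]
        congr 1
        exact ENNReal.ofReal_mul (by linarith)
      simp_rw [heq]
      rw [lintegral_add_left measurable_const, lintegral_const_mul _
        ((hrpmeas (β + 1) (by linarith)).ennreal_ofReal), lintegral_const]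
      simp only [measure_univ, mul_one]
      exact ENNReal.add_lt_top.2 ⟨ENNReal.ofReal_lt_top, ENNReal.mul_lt_top ENNReal.ofReal_lt_top hmom⟩
  have hfP : ∀ t x, 0 ≤ t → Integrable f (P t x) := by
    intro t x ht
    haveI := hP t x ht
    exact hfint (P t x) ((hC2 t x ht).trans_lt ENNReal.ofReal_lt_top)
  have hfμint : Integrable f μ := hfint μ (hP2 (β + 1) (by linarith))
  have hCf0 : (0:ℝ) < Cf := lt_of_lt_of_le one_pos hCf
  set K : ℝ := 2 * Cf * C3' + 2 * Cf * (C1' + Mμ1) with hKdef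
  have hKnn : 0 ≤ K := by
    rw [hKdef]
    exact add_nonneg (mul_nonneg (by linarith) hC3'nn)
      (mul_nonneg (by linarith) (add_nonneg hC1'nn hMμ1nn))
  have key : ∀ t x, 0 ≤ t → |∫ y, f y ∂(P t x)| ≤
      K * (1 + ‖x‖ ^ m) * ((1 + t) ^ (-1 - a) + (1 + t) ^ (-(a * γ))) := by
    intro t x ht
    haveI := hP t x ht
    have h1t : (0:ℝ) < 1 + t := by linarith
    have h1t1 : (1:ℝ) ≤ 1 + t := by linarith
    set R : ℝ := (1 + t) ^ a with hRdef
    have hR1 : 1 ≤ R := Real.one_le_rpow h1t1 hapos.le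
    have hR0 : 0 < R := by linarith
    set g1 := fun y : EuclideanSpace ℝ (Fin d) => if ‖y‖ ≤ R then f y else 0 with hg1def
    set g2 := fun y : EuclideanSpace ℝ (Fin d) => if ‖y‖ ≤ R then 0 else f y with hg2def
    have hg1y : ∀ y, g1 y = if ‖y‖ ≤ R then f y else 0 := fun y => rfl
    have hg2y : ∀ y, g2 y = if ‖y‖ ≤ R then 0 else f y := fun y => rfl
    have hSmeas : MeasurableSet {y : EuclideanSpace ℝ (Fin d) | ‖y‖ ≤ R} :=
      measurableSet_le continuous_norm.measurable measurable_const
    have hg1m : Measurable g1 := Measurable.ite hSmeas hf measurable_const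
    have hg2m : Measurable g2 := Measurable.ite hSmeas measurable_const hf
    have hRβnn : (0:ℝ) ≤ R ^ β := Real.rpow_nonneg hR0.le β
    have hM : (0:ℝ) ≤ Cf * (1 + R ^ β) := mul_nonneg (by linarith) (by linarith)
    have hg1b : ∀ y, |g1 y| ≤ Cf * (1 + R ^ β) := by
      intro y
      rw [hg1y y]
      by_cases h : ‖y‖ ≤ R
      · rw [if_pos h]
        refine (hfb y).trans ?_
        have h2 : ‖y‖ ^ β ≤ R ^ β := Real.rpow_le_rpow (norm_nonneg y) h hβ
        exact mul_le_mul_of_nonneg_left (by linarith) (by linarith)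
      · rw [if_neg h, abs_zero]; exact hM
    have hcnn : (0:ℝ) ≤ 2 * Cf * R ^ (-γ) := by
      exact mul_nonneg (by linarith) (Real.rpow_nonneg hR0.le _)
    have hg2b : ∀ y, |g2 y| ≤ (2 * Cf * R ^ (-γ)) * ‖y‖ ^ (β + γ) := by
      intro y
      rw [hg2y y]
      by_cases h : ‖y‖ ≤ R
      · rw [if_pos h, abs_zero]
        exact mul_nonneg hcnn (Real.rpow_nonneg (norm_nonneg y) _)
      · rw [if_neg h]
        push_neg at h
        have hy1 : (1:ℝ) ≤ ‖y‖ := le_trans hR1 h.le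
        have hy0 : (0:ℝ) < ‖y‖ := by linarith
        have hb1' : (1:ℝ) ≤ ‖y‖ ^ β := Real.one_le_rpow hy1 hβ
        have hγR : R ^ γ ≤ ‖y‖ ^ γ := Real.rpow_le_rpow hR0.le h.le hγpos.le
        have hRγpos : 0 < R ^ γ := Real.rpow_pos_of_pos hR0 γ
        have h1' : (1:ℝ) ≤ R ^ (-γ) * ‖y‖ ^ γ := by
          rw [Real.rpow_neg hR0.le, ← div_eq_inv_mul]
          exact (one_le_div hRγpos).mpr hγR
        have hsplit : ‖y‖ ^ (β + γ) = ‖y‖ ^ β * ‖y‖ ^ γ := Real.rpow_add hy0 β γ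
        have hnb : (0:ℝ) ≤ ‖y‖ ^ β := by linarith
        calc |f y| ≤ Cf * (1 + ‖y‖ ^ β) := hfb y
          _ ≤ Cf * (2 * ‖y‖ ^ β) := mul_le_mul_of_nonneg_left (by linarith) (by linarith)
          _ = (2 * Cf) * ‖y‖ ^ β := by ring
          _ ≤ (2 * Cf) * (‖y‖ ^ β * (R ^ (-γ) * ‖y‖ ^ γ)) :=
              mul_le_mul_of_nonneg_left (le_mul_of_one_le_right hnb h1') (by linarith)
          _ = (2 * Cf * R ^ (-γ)) * ‖y‖ ^ (β + γ) := by rw [hsplit]; ring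
    have hg1iP : Integrable g1 (P t x) := integrable_of_forall_abs_le hg1m hg1b
    have hg1iμ : Integrable g1 μ := integrable_of_forall_abs_le hg1m hg1b
    have hle2 : ∀ y : EuclideanSpace ℝ (Fin d), ‖g2 y‖ ≤ ‖f y‖ := by
      intro y
      rw [hg2y y]
      by_cases h : ‖y‖ ≤ R
      · rw [if_pos h]; simp
      · rw [if_neg h]
    have hg2iP : Integrable g2 (P t x) :=
      (hfP t x ht).mono hg2m.aestronglyMeasurable (Filter.Eventually.of_forall hle2)
    have hg2iμ : Integrable g2 μ :=
      hfμint.mono hg2m.aestronglyMeasurable (Filter.Eventually.of_forall hle2)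
    have hsplitf : ∀ (ν : Measure (EuclideanSpace ℝ (Fin d))),
        Integrable g1 ν → Integrable g2 ν →
        ∫ y, f y ∂ν = (∫ y, g1 y ∂ν) + ∫ y, g2 y ∂ν := by
      intro ν h1i h2i
      rw [← integral_add h1i h2i]
      refine integral_congr_ae (Filter.Eventually.of_forall fun y => ?_)
      show f y = g1 y + g2 y
      rw [hg1y y, hg2y y]
      by_cases h : ‖y‖ ≤ R
      · rw [if_pos h, if_pos h, add_zero]
      · rw [if_neg h, if_neg h, zero_add]
    -- decomposition
    have hfin : ∫ y, f y ∂(P t x) =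
        ((∫ y, g1 y ∂(P t x)) - ∫ y, g1 y ∂μ) + ((∫ y, g2 y ∂(P t x)) - ∫ y, g2 y ∂μ) := by
      have e1 := hsplitf (P t x) hg1iP hg2iP
      have e2 := hsplitf μ hg1iμ hg2iμ
      have e3 : (∫ y, g1 y ∂μ) + ∫ y, g2 y ∂μ = 0 := e2.symm.trans hfμ
      rw [e1]; linarith
    -- T1 bound
    have hRβ : R ^ β = (1 + t) ^ (a * β) := by
      rw [hRdef]; exact (Real.rpow_mul h1t.le a β).symm
    have hRγ' : R ^ (-γ) = (1 + t) ^ (-(a * γ)) := by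
      rw [hRdef, ← Real.rpow_mul h1t.le]
      congr 1; ring
    have h2ab : (1:ℝ) ≤ (1 + t) ^ (a * β) :=
      Real.one_le_rpow h1t1 (mul_nonneg hapos.le hβ)
    have h3ab : (1 + t) ^ (a * β) * (1 + t) ^ (-(k + 1)) = (1 + t) ^ (-1 - a) := by
      rw [← Real.rpow_add h1t]
      congr 1
      rw [hkdef]; ring
    have hAnn : (0:ℝ) ≤ (1 + t) ^ (-1 - a) := Real.rpow_nonneg h1t.le _
    have hBnn : (0:ℝ) ≤ (1 + t) ^ (-(a * γ)) := Real.rpow_nonneg h1t.le _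
    have hknn : (0:ℝ) ≤ (1 + t) ^ (-(k + 1)) := Real.rpow_nonneg h1t.le _
    have hT1 : |(∫ y, g1 y ∂(P t x)) - ∫ y, g1 y ∂μ| ≤
        (2 * Cf * C3') * ((1 + ‖x‖ ^ m) * (1 + t) ^ (-1 - a)) := by
      have h0 := abs_integral_sub_le_tvNorm (P t x) μ hg1m hM hg1b
      have h1 := hC3' t x ht
      have htv : 0 ≤ tvNorm (P t x) μ := add_nonneg ENNReal.toReal_nonneg ENNReal.toReal_nonneg
      have hs1 : Cf * (1 + R ^ β) * tvNorm (P t x) μ ≤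
          Cf * (1 + R ^ β) * (C3' * (1 + ‖x‖ ^ m) * (1 + t) ^ (-(k + 1))) :=
        mul_le_mul_of_nonneg_left h1 hM
      have hs2 : Cf * (1 + R ^ β) ≤ Cf * (2 * (1 + t) ^ (a * β)) := by
        rw [hRβ]; exact mul_le_mul_of_nonneg_left (by linarith) (by linarith)
      have hrhsnn : (0:ℝ) ≤ C3' * (1 + ‖x‖ ^ m) * (1 + t) ^ (-(k + 1)) :=
        mul_nonneg (mul_nonneg hC3'nn (hXpos x).le) hknn
      have hs3 : Cf * (1 + R ^ β) * (C3' * (1 + ‖x‖ ^ m) * (1 + t) ^ (-(k + 1))) ≤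
          Cf * (2 * (1 + t) ^ (a * β)) * (C3' * (1 + ‖x‖ ^ m) * (1 + t) ^ (-(k + 1))) :=
        mul_le_mul_of_nonneg_right hs2 hrhsnn
      have hs4 : Cf * (2 * (1 + t) ^ (a * β)) * (C3' * (1 + ‖x‖ ^ m) * (1 + t) ^ (-(k + 1))) =
          (2 * Cf * C3') * ((1 + ‖x‖ ^ m) * ((1 + t) ^ (a * β) * (1 + t) ^ (-(k + 1)))) := by
        ring
      rw [hs4, h3ab] at hs3
      linarith
    -- T2 bounds
    have hlintP : ∫⁻ y, ENNReal.ofReal ((2 * Cf * R ^ (-γ)) * ‖y‖ ^ (β + γ)) ∂(P t x) ≤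
        ENNReal.ofReal ((2 * Cf * R ^ (-γ)) * (C1' * (1 + ‖x‖ ^ m))) := by
      calc ∫⁻ y, ENNReal.ofReal ((2 * Cf * R ^ (-γ)) * ‖y‖ ^ (β + γ)) ∂(P t x)
          = ENNReal.ofReal (2 * Cf * R ^ (-γ)) *
            ∫⁻ y, ENNReal.ofReal (‖y‖ ^ (β + γ)) ∂(P t x) := by
            simp_rw [ENNReal.ofReal_mul hcnn]
            exact lintegral_const_mul _ ((hrpmeas (β + γ) hβγpos.le).ennreal_ofReal)
        _ ≤ ENNReal.ofReal (2 * Cf * R ^ (-γ)) * ENNReal.ofReal (C1' * (1 + ‖x‖ ^ m)) :=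
            mul_le_mul_right (hC1' t x ht) _
        _ = ENNReal.ofReal ((2 * Cf * R ^ (-γ)) * (C1' * (1 + ‖x‖ ^ m))) :=
            (ENNReal.ofReal_mul hcnn).symm
    have hlintμ : ∫⁻ y, ENNReal.ofReal ((2 * Cf * R ^ (-γ)) * ‖y‖ ^ (β + γ)) ∂μ =
        ENNReal.ofReal ((2 * Cf * R ^ (-γ)) * Mμ1) := by
      calc ∫⁻ y, ENNReal.ofReal ((2 * Cf * R ^ (-γ)) * ‖y‖ ^ (β + γ)) ∂μ
          = ENNReal.ofReal (2 * Cf * R ^ (-γ)) *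
            ∫⁻ y, ENNReal.ofReal (‖y‖ ^ (β + γ)) ∂μ := by
            simp_rw [ENNReal.ofReal_mul hcnn]
            exact lintegral_const_mul _ ((hrpmeas (β + γ) hβγpos.le).ennreal_ofReal)
        _ = ENNReal.ofReal ((2 * Cf * R ^ (-γ)) * Mμ1) := by
            rw [hMμ1, ENNReal.ofReal_mul hcnn]
    have hIP : ∫ y, |g2 y| ∂(P t x) ≤ (2 * Cf * R ^ (-γ)) * (C1' * (1 + ‖x‖ ^ m)) :=
      integral_abs_le_of_lintegral_le hg2m hg2b
        (mul_nonneg hcnn (mul_nonneg hC1'nn (hXpos x).le)) hlintP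
    have hIμ : ∫ y, |g2 y| ∂μ ≤ (2 * Cf * R ^ (-γ)) * Mμ1 :=
      integral_abs_le_of_lintegral_le hg2m hg2b (mul_nonneg hcnn hMμ1nn) hlintμ.le
    have habsP : |∫ y, g2 y ∂(P t x)| ≤ ∫ y, |g2 y| ∂(P t x) := by
      simpa [Real.norm_eq_abs] using norm_integral_le_integral_norm (μ := P t x) g2
    have habsμ : |∫ y, g2 y ∂μ| ≤ ∫ y, |g2 y| ∂μ := by
      simpa [Real.norm_eq_abs] using norm_integral_le_integral_norm (μ := μ) g2
    have hT2 : |(∫ y, g2 y ∂(P t x)) - ∫ y, g2 y ∂μ| ≤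
        (2 * Cf * (1 + t) ^ (-(a * γ))) * (C1' * (1 + ‖x‖ ^ m) + Mμ1) := by
      have h5 : |(∫ y, g2 y ∂(P t x)) - ∫ y, g2 y ∂μ| ≤
          |∫ y, g2 y ∂(P t x)| + |∫ y, g2 y ∂μ| := abs_sub _ _
      rw [hRγ'] at hIP hIμ
      calc |(∫ y, g2 y ∂(P t x)) - ∫ y, g2 y ∂μ|
          ≤ |∫ y, g2 y ∂(P t x)| + |∫ y, g2 y ∂μ| := h5
        _ ≤ (2 * Cf * (1 + t) ^ (-(a * γ))) * (C1' * (1 + ‖x‖ ^ m)) +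
            (2 * Cf * (1 + t) ^ (-(a * γ))) * Mμ1 := by
            have := habsP.trans hIP
            have := habsμ.trans hIμ
            linarith
        _ = (2 * Cf * (1 + t) ^ (-(a * γ))) * (C1' * (1 + ‖x‖ ^ m) + Mμ1) := by ring
    -- combine
    have hstep : |∫ y, f y ∂(P t x)| ≤
        (2 * Cf * C3') * ((1 + ‖x‖ ^ m) * (1 + t) ^ (-1 - a)) +
        (2 * Cf * (1 + t) ^ (-(a * γ))) * (C1' * (1 + ‖x‖ ^ m) + Mμ1) := by
      rw [hfin]
      exact (abs_add_le _ _).trans (add_le_add hT1 hT2)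
    have hX1 : (1:ℝ) ≤ 1 + ‖x‖ ^ m := by
      have := Real.rpow_nonneg (norm_nonneg x) m; linarith
    set X : ℝ := 1 + ‖x‖ ^ m
    set A : ℝ := (1 + t) ^ (-1 - a)
    set B : ℝ := (1 + t) ^ (-(a * γ))
    have hgoal : (2 * Cf * C3') * (X * A) + (2 * Cf * B) * (C1' * X + Mμ1) ≤
        K * X * (A + B) := by
      rw [hKdef]
      have hXnn : (0:ℝ) ≤ X := by linarith
      have p1 : (0:ℝ) ≤ (2 * Cf * C1') * (X * A) :=
        mul_nonneg (mul_nonneg (by linarith) hC1'nn) (mul_nonneg hXnn hAnn)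
      have p2 : (0:ℝ) ≤ (2 * Cf * Mμ1) * (X * A) :=
        mul_nonneg (mul_nonneg (by linarith) hMμ1nn) (mul_nonneg hXnn hAnn)
      have p3 : (0:ℝ) ≤ (2 * Cf * C3') * (X * B) :=
        mul_nonneg (mul_nonneg (by linarith) hC3'nn) (mul_nonneg hXnn hBnn)
      have p4 : (0:ℝ) ≤ (2 * Cf * Mμ1) * (B * (X - 1)) :=
        mul_nonneg (mul_nonneg (by linarith) hMμ1nn) (mul_nonneg hBnn (by linarith))
      linarith only [p1, p2, p3, p4]
    calc |∫ y, f y ∂(P t x)| ≤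
        (2 * Cf * C3') * (X * A) + (2 * Cf * B) * (C1' * X + Mμ1) := hstep
      _ ≤ K * X * (A + B) := hgoal
  -- integrability in t of the bound
  have hq1 : -1 - a < -1 := by linarith
  have hq2 : -(a * γ) < -1 := by linarith
  have hg0int : IntegrableOn
      (fun t : ℝ => (1 + t) ^ (-1 - a) + (1 + t) ^ (-(a * γ))) (Ioi (0:ℝ)) :=
    (integrableOn_one_add_rpow hq1).add (integrableOn_one_add_rpow hq2)
  set g0 : ℝ → ℝ := fun t => (1 + t) ^ (-1 - a) + (1 + t) ^ (-(a * γ)) with hg0def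
  set I0 : ℝ := ∫ t in Ioi (0:ℝ), g0 t with hI0def
  -- kernel and measurability
  set κ := pKernel P μ hmeas with hκdef
  haveI : ProbabilityTheory.IsMarkovKernel κ := pKernel_isMarkov P μ hmeas hP hμ
  have hκP : ∀ (t : ℝ) x, 0 ≤ t → κ (t, x) = P t x := by
    intro t x ht
    rw [hκdef, pKernel_apply]
    simp [ht]
  have SMκ : StronglyMeasurable
      (fun p : ℝ × EuclideanSpace ℝ (Fin d) => ∫ y, f y ∂κ p) :=
    StronglyMeasurable.integral_kernel_prod_right' (κ := κ)
      (hf.stronglyMeasurable.comp_measurable measurable_snd)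
  have main : ∀ x,
      IntegrableOn (fun t => ∫ y, f y ∂(P t x)) (Ioi (0 : ℝ)) ∧
      IntegrableOn (fun t => |∫ y, f y ∂(P t x)|) (Ioi (0 : ℝ)) ∧
      (∫ t in Ioi (0 : ℝ), |∫ y, f y ∂(P t x)|) ≤ (K * I0) * (1 + ‖x‖ ^ m) ∧
      |∫ t in Ioi (0 : ℝ), ∫ y, f y ∂(P t x)|
        ≤ ∫ t in Ioi (0 : ℝ), |∫ y, f y ∂(P t x)| := by
    intro x
    have hmt : AEStronglyMeasurable (fun t => ∫ y, f y ∂(P t x))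
        (volume.restrict (Ioi (0:ℝ))) := by
      have h1 : StronglyMeasurable (fun t : ℝ => ∫ y, f y ∂κ (t, x)) :=
        SMκ.comp_measurable (measurable_id.prodMk measurable_const)
      refine h1.aestronglyMeasurable.congr ?_
      filter_upwards [ae_restrict_mem measurableSet_Ioi] with t ht
      rw [hκP t x (le_of_lt ht)]
    have hbint : IntegrableOn (fun t => K * (1 + ‖x‖ ^ m) * g0 t) (Ioi (0:ℝ)) :=
      hg0int.const_mul _
    have hint1 : IntegrableOn (fun t => ∫ y, f y ∂(P t x)) (Ioi (0:ℝ)) := by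
      refine Integrable.mono' hbint hmt ?_
      filter_upwards [ae_restrict_mem measurableSet_Ioi] with t ht
      rw [Real.norm_eq_abs]
      exact key t x (le_of_lt ht)
    refine ⟨hint1, hint1.abs, ?_, ?_⟩
    · calc ∫ t in Ioi (0:ℝ), |∫ y, f y ∂(P t x)|
          ≤ ∫ t in Ioi (0:ℝ), K * (1 + ‖x‖ ^ m) * g0 t := by
            refine setIntegral_mono_on hint1.abs hbint measurableSet_Ioi fun t ht => ?_
            exact key t x (le_of_lt ht)
        _ = K * (1 + ‖x‖ ^ m) * I0 := by rw [integral_const_mul]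
        _ = (K * I0) * (1 + ‖x‖ ^ m) := by ring
    · simpa [Real.norm_eq_abs] using
        norm_integral_le_integral_norm (μ := volume.restrict (Ioi (0:ℝ)))
          (fun t => ∫ y, f y ∂(P t x))
  refine ⟨K * I0, main, ?_⟩
  have SMF : StronglyMeasurable (fun x : EuclideanSpace ℝ (Fin d) =>
      ∫ t in Ioi (0:ℝ), ∫ y, f y ∂κ (t, x)) :=
    StronglyMeasurable.integral_prod_right' (SMκ.comp_measurable measurable_swap)
  have heqF : (fun x : EuclideanSpace ℝ (Fin d) =>
      ∫ t in Ioi (0:ℝ), ∫ y, f y ∂(P t x)) =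
      fun x => ∫ t in Ioi (0:ℝ), ∫ y, f y ∂κ (t, x) := by
    funext x
    refine setIntegral_congr_fun measurableSet_Ioi fun t ht => ?_
    rw [hκP t x (le_of_lt ht)]
  have hmom : Integrable (fun x : EuclideanSpace ℝ (Fin d) => ‖x‖ ^ m) μ :=
    integrable_of_abs_le_lint (hrpmeas m (by linarith)) (b := fun x => ‖x‖ ^ m)
      (fun x => le_of_eq (abs_of_nonneg (Real.rpow_nonneg (norm_nonneg x) m)))
      (hP2 m (by linarith))
  have hdom : Integrable (fun x : EuclideanSpace ℝ (Fin d) =>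
      (K * I0) * (1 + ‖x‖ ^ m)) μ := ((integrable_const (1:ℝ)).add hmom).const_mul _
  refine Integrable.mono' hdom ?_ ?_
  · rw [heqF]; exact SMF.aestronglyMeasurable
  · refine Filter.Eventually.of_forall fun x => ?_
    rw [Real.norm_eq_abs]
    exact ((main x).2.2.2).trans ((main x).2.2.1)
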